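/- Let O ⊆ 𝕋 be a nonempty finite minimal invariant set. Then the normalized counting measure on O is an invariant probability measure, and it is the unique invariant probability measure μ on 𝕋 with μ(O) = 1. -/

import Mathlib

open MeasureTheory

noncomputable section

/-- The circle `[0,1]` with endpoints identified. -/
abbrev 𝕋 := AddCircle (1 : ℝ)

instance : IsProbabilityMeasure (volume : Measure 𝕋) :=
  ⟨by simp [AddCircle.measure_univ]⟩

/-- The doubling map. -/
def T (x : 𝕋) : 𝕋 := 2 • x

/-- The tripling map. -/
def S (x : 𝕋) : 𝕋 := 3 • x

/-- A set is invariant if it is forward invariant under both `T` and `S`. -/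
def Invariant (O : Set 𝕋) : Prop := T '' O ⊆ O ∧ S '' O ⊆ O

/-- A nonempty finite invariant set is minimal if every nonempty invariant subset equals it. -/
def MinimalInvariant (O : Set 𝕋) : Prop :=
  O.Nonempty ∧ O.Finite ∧ Invariant O ∧
    ∀ O' ⊆ O, O'.Nonempty → Invariant O' → O' = O

/-- A measure is invariant if both `T` and `S` are measure preserving for it. -/
def InvariantMeasure (μ : Measure 𝕋) : Prop :=
  MeasurePreserving T μ μ ∧ MeasurePreserving S μ μ

/-- The normalized counting measure on a set: each point of a finite set `O`
gets mass `1 / |O|`. -/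
def normCount (O : Set 𝕋) : Measure 𝕋 :=
  (O.ncard : ENNReal)⁻¹ • Measure.count.restrict O

/-- `Fn n` is the set of points `i/n` of the circle with `0 < i < n`. -/
def Fn (n : ℕ) : Set 𝕋 := {x : 𝕋 | ∃ i : ℕ, 0 < i ∧ i < n ∧ x = ((i : ℝ) / n : ℝ)}

open Set in
lemma measurable_T : Measurable T := (continuous_nsmul 2).measurable

open Set in
lemma measurable_S : Measurable S := (continuous_nsmul 3).measurable

lemma measure_coe_finset_eq_sum (μ : Measure 𝕋) (s : Finset 𝕋) :
    μ ↑s = ∑ x ∈ s, μ {x} := by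
  rw [← measure_biUnion_finset ?_ (fun b _ => measurableSet_singleton b)]
  · rw [← Finset.set_biUnion_coe, Set.biUnion_of_singleton]
  · intro x _ y _ hxy; simp [Set.disjoint_singleton, hxy]

lemma measure_finite_eq_sum (μ : Measure 𝕋) {s : Set 𝕋} (hs : s.Finite) :
    μ s = ∑ x ∈ hs.toFinset, μ {x} := by
  conv_lhs => rw [← hs.coe_toFinset]
  rw [measure_coe_finset_eq_sum]

open Set in
lemma bijOn_of_minimal (O : Set 𝕋) (hO : MinimalInvariant O) :
    BijOn T O O ∧ BijOn S O O := by
  obtain ⟨hne, hfin, hinv, hmin⟩ := hO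
  have hcomm : ∀ x : 𝕋, S (T x) = T (S x) := by
    intro x; simp only [S, T, smul_smul]; norm_num
  have hTO : T '' O = O := by
    refine hmin _ hinv.1 (hne.image T) ⟨image_mono hinv.1, ?_⟩
    rintro _ ⟨_, ⟨y, hy, rfl⟩, rfl⟩
    exact ⟨S y, hinv.2 ⟨y, hy, rfl⟩, (hcomm y).symm⟩
  have hSO : S '' O = O := by
    refine hmin _ hinv.2 (hne.image S) ⟨?_, image_mono hinv.2⟩
    rintro _ ⟨_, ⟨y, hy, rfl⟩, rfl⟩
    exact ⟨T y, hinv.1 ⟨y, hy, rfl⟩, hcomm y⟩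
  constructor
  · exact (hfin.surjOn_iff_bijOn_of_mapsTo (mapsTo_iff_image_subset.mpr hinv.1)).mp hTO.ge
  · exact (hfin.surjOn_iff_bijOn_of_mapsTo (mapsTo_iff_image_subset.mpr hinv.2)).mp hSO.ge

open Set in
lemma ncard_preimage_inter {f : 𝕋 → 𝕋} {O : Set 𝕋} (hbij : BijOn f O O) (A : Set 𝕋) :
    ((f ⁻¹' A) ∩ O).ncard = (A ∩ O).ncard := by
  have himg : f '' (f ⁻¹' A ∩ O) = A ∩ O := by
    apply Subset.antisymm
    · rintro _ ⟨x, ⟨hxA, hxO⟩, rfl⟩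
      exact ⟨hxA, hbij.mapsTo hxO⟩
    · rintro y ⟨hyA, hyO⟩
      obtain ⟨x, hxO, rfl⟩ := hbij.surjOn hyO
      exact ⟨x, ⟨hyA, hxO⟩, rfl⟩
  rw [← himg, Set.ncard_image_of_injOn (hbij.injOn.mono inter_subset_right)]

open Set in
lemma normCount_apply {O : Set 𝕋} (hfin : O.Finite) {A : Set 𝕋} (hA : MeasurableSet A) :
    normCount O A = (O.ncard : ENNReal)⁻¹ * ((A ∩ O).ncard : ENNReal) := by
  have hAO : (A ∩ O).Finite := hfin.subset inter_subset_right
  rw [normCount, Measure.smul_apply, Measure.restrict_apply hA,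
    Measure.count_apply_finite _ hAO, smul_eq_mul,
    Set.ncard_eq_toFinset_card _ hAO]

/-- The normalized counting measure on a nonempty finite minimal invariant set `O` is an
invariant probability measure, and is the unique invariant probability measure giving
`O` full mass. -/
theorem normCount_unique_invariant (O : Set 𝕋) (hO : MinimalInvariant O) :
    IsProbabilityMeasure (normCount O) ∧ InvariantMeasure (normCount O) ∧
    ∀ μ : Measure 𝕋, IsProbabilityMeasure μ → InvariantMeasure μ → μ O = 1 →
      μ = normCount O := by
  obtain ⟨hne, hfin, hinv, hmin⟩ := hO
  obtain ⟨hbijT, hbijS⟩ := bijOn_of_minimal O ⟨hne, hfin, hinv, hmin⟩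
  have hOmeas : MeasurableSet O := hfin.measurableSet
  have hn0 : (O.ncard : ENNReal) ≠ 0 := by
    simpa using ((Set.ncard_pos hfin).mpr hne).ne'
  have hntop : (O.ncard : ENNReal) ≠ ⊤ := ENNReal.natCast_ne_top _
  have hninv : (O.ncard : ENNReal)⁻¹ * (O.ncard : ENNReal) = 1 :=
    ENNReal.inv_mul_cancel hn0 hntop
  have hprob : IsProbabilityMeasure (normCount O) := by
    constructor
    rw [normCount_apply hfin MeasurableSet.univ, Set.univ_inter]
    exact hninv
  have hpres : ∀ f : 𝕋 → 𝕋, Measurable f → Set.BijOn f O O →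
      MeasurePreserving f (normCount O) (normCount O) := by
    intro f hf hbij
    refine ⟨hf, Measure.ext fun A hA => ?_⟩
    rw [Measure.map_apply hf hA, normCount_apply hfin (hf hA), normCount_apply hfin hA,
      ncard_preimage_inter hbij]
  refine ⟨hprob, ⟨hpres T measurable_T hbijT, hpres S measurable_S hbijS⟩, ?_⟩
  intro μ hμprob hμinv hμO
  have hcompl : μ Oᶜ = 0 := by
    rw [measure_compl hOmeas (hμO ▸ ENNReal.one_ne_top), hμO, measure_univ, tsub_self]
  have hrestr : ∀ A : Set 𝕋, μ A = μ (A ∩ O) := by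
    intro A
    have h0 : μ (A \ O) = 0 :=
      measure_mono_null (fun y hy => hy.2) hcompl
    rw [← measure_inter_add_diff A hOmeas, h0, add_zero]
  have key : ∀ f : 𝕋 → 𝕋, MeasurePreserving f μ μ → Set.BijOn f O O →
      ∀ x ∈ O, μ {f x} = μ {x} := by
    intro f hfp hbij x hx
    have hset : (f ⁻¹' {f x}) ∩ O = {x} := by
      apply Set.Subset.antisymm
      · rintro y ⟨hy1, hy2⟩
        exact hbij.injOn hy2 hx hy1
      · rintro y rfl
        exact ⟨rfl, hx⟩
    rw [← hfp.measure_preimage (measurableSet_singleton (f x)).nullMeasurableSet,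
      hrestr (f ⁻¹' {f x}), hset]
  have hconst : ∀ x ∈ O, ∀ y ∈ O, μ {y} = μ {x} := by
    intro x hx
    have hsub : {y | y ∈ O ∧ μ {y} = μ {x}} ⊆ O := fun y hy => hy.1
    have heq : {y | y ∈ O ∧ μ {y} = μ {x}} = O := by
      refine hmin _ hsub ⟨x, hx, rfl⟩ ⟨?_, ?_⟩
      · rintro _ ⟨y, ⟨hyO, hy⟩, rfl⟩
        exact ⟨hinv.1 (Set.mem_image_of_mem T hyO), (key T hμinv.1 hbijT y hyO).trans hy⟩
      · rintro _ ⟨y, ⟨hyO, hy⟩, rfl⟩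
        exact ⟨hinv.2 (Set.mem_image_of_mem S hyO), (key S hμinv.2 hbijS y hyO).trans hy⟩
    intro y hy
    rw [← heq] at hy
    exact hy.2
  obtain ⟨x₀, hx₀⟩ := hne
  set c := μ {x₀} with hc
  have hsum : (O.ncard : ENNReal) * c = 1 := by
    have h1 : μ O = ∑ y ∈ hfin.toFinset, μ {y} := measure_finite_eq_sum μ hfin
    have h2 : ∑ y ∈ hfin.toFinset, μ {y} = ∑ _y ∈ hfin.toFinset, c :=
      Finset.sum_congr rfl fun y hy => hconst x₀ hx₀ y (hfin.mem_toFinset.mp hy)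
    rw [h1, h2, Finset.sum_const, ← Set.ncard_eq_toFinset_card _ hfin] at hμO
    rw [← hμO, nsmul_eq_mul]
  have hcval : c = (O.ncard : ENNReal)⁻¹ := by
    have h := congrArg (fun t => (O.ncard : ENNReal)⁻¹ * t) hsum
    simp only [← mul_assoc, hninv, one_mul, mul_one] at h
    exact h
  refine Measure.ext fun A hA => ?_
  have hAO : (A ∩ O).Finite := hfin.subset Set.inter_subset_right
  have h1 : μ (A ∩ O) = ∑ y ∈ hAO.toFinset, μ {y} := measure_finite_eq_sum μ hAO
  have h2 : ∑ y ∈ hAO.toFinset, μ {y} = ∑ _y ∈ hAO.toFinset, c :=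
    Finset.sum_congr rfl fun y hy => hconst x₀ hx₀ y (hAO.mem_toFinset.mp hy).2
  rw [hrestr A, h1, h2, Finset.sum_const, ← Set.ncard_eq_toFinset_card _ hAO,
    nsmul_eq_mul, hcval, normCount_apply hfin hA, mul_comm]
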